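/- arXiv:2101.04999 — 2 statements merged into one kernel-verified Lean document; each statement's English description precedes it below -/
import Mathlib

section
/- Let m ≥ 2 and set N_k = (m²−1)^k for k ≥ 1. Then the multiplicative order of m modulo N_k equals 2·(m²−1)^{k−1} for every k ≥ 1. -/
private lemma binom_aux (a : ℤ) (t : ℕ) :
    ∃ c : ℤ, (1+a)^t = 1 + t*a + (t.choose 2)*a^2 + a^3 * c := by
  induction t with
  | zero => exact ⟨0, by norm_num⟩
  | succ t ih =>
    obtain ⟨c, hc⟩ := ih
    have hch : (t+1).choose 2 = t.choose 2 + t := by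
      rw [Nat.choose_succ_succ, Nat.choose_one_right]; norm_num [Nat.add_comm]
    refine ⟨c + (t.choose 2) + a * c, ?_⟩
    rw [pow_succ, hc, hch]
    push_cast
    ring

private lemma key_w (n : ℕ) (hn3 : 3 ≤ n) (h8 : 2 ∣ n → 8 ∣ n) (k : ℕ) :
    ∃ w : ℤ, (1 + (n:ℤ))^(n^k) = 1 + (n:ℤ)^(k+1) * w ∧ IsCoprime (n:ℤ) w := by
  have h2C : ((n.choose 2 : ℕ) : ℤ) * 2 = (n:ℤ) * ((n:ℤ) - 1) := by
    obtain ⟨p, rfl⟩ : ∃ p, n = p + 1 := ⟨n-1, by omega⟩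
    have he : 2 ∣ (p+1) * ((p+1) - 1) := by
      rcases Nat.even_mul_succ_self p with ⟨r, hr⟩
      exact ⟨r, by simpa [Nat.mul_comm] using by omega⟩
    have hN : (p+1).choose 2 * 2 = (p+1) * ((p+1) - 1) := by
      rw [Nat.choose_two_right, Nat.div_mul_cancel he]
    have h1 : (1:ℕ) ≤ p + 1 := by omega
    zify [h1] at hN
    exact hN
  induction k with
  | zero => exact ⟨1, by norm_num, isCoprime_one_right⟩
  | succ k ih =>
    obtain ⟨w, hw, hcop⟩ := ih
    obtain ⟨c, hc⟩ := binom_aux ((n:ℤ)^(k+1) * w) n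
    refine ⟨w * (1 + (n.choose 2) * ((n:ℤ)^k * w) + (n:ℤ)^(2*k+1) * w^2 * c), ?_, ?_⟩
    · rw [pow_succ, pow_mul, hw, hc]
      ring
    · refine hcop.mul_right ?_
      rw [Int.isCoprime_iff_gcd_eq_one]
      set V : ℤ := 1 + (n.choose 2) * ((n:ℤ)^k * w) + (n:ℤ)^(2*k+1) * w^2 * c with hV
      set g := Int.gcd (n:ℤ) V with hg
      have hgn : (g:ℤ) ∣ (n:ℤ) := Int.gcd_dvd_left _ _
      have hgV : (g:ℤ) ∣ V := Int.gcd_dvd_right _ _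
      have hkey : 2 * V - ((n:ℤ)*((n:ℤ)-1)*((n:ℤ)^k*w) + 2*((n:ℤ)^(2*k+1)*w^2*c)) = 2 := by
        rw [hV]; linear_combination ((n:ℤ)^k*w) * h2C
      have hg2 : (g:ℤ) ∣ 2 := by
        have h1 : (g:ℤ) ∣ (n:ℤ)*((n:ℤ)-1)*((n:ℤ)^k*w) := (hgn.mul_right _).mul_right _
        have h2 : (g:ℤ) ∣ 2*((n:ℤ)^(2*k+1)*w^2*c) := by
          have : (g:ℤ) ∣ (n:ℤ)^(2*k+1) := hgn.trans (dvd_pow_self _ (by omega))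
          exact ((this.mul_right _).mul_right _).mul_left 2
        have := dvd_sub (hgV.mul_left 2) (dvd_add h1 h2)
        rwa [hkey] at this
      have hg2' : g ∣ 2 := by exact_mod_cast hg2
      rcases (Nat.prime_two.eq_one_or_self_of_dvd g hg2') with h1 | h2
      · exact h1
      · exfalso
        rw [h2] at hgn hgV
        have h2n : 2 ∣ n := by exact_mod_cast hgn
        obtain ⟨s, hs⟩ := h8 h2n
        have hceven : 2 ∣ n.choose 2 := by
          have hq : n * (n - 1) = 2 * (4 * (s * (n-1))) := by rw [hs]; ring
          rw [Nat.choose_two_right, hq, Nat.mul_div_cancel_left _ (by norm_num)]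
          exact ⟨2 * (s * (n-1)), by ring⟩
        obtain ⟨r, hr⟩ := hceven
        have hn2 : (n:ℤ) = 2 * (4 * s) := by rw [hs]; push_cast; ring
        have hrZ : ((n.choose 2 : ℕ) : ℤ) = 2 * r := by exact_mod_cast hr
        have hVodd : V = 2 * ((r:ℤ) * ((n:ℤ)^k*w) + (4*(s:ℤ)) * ((n:ℤ)^(2*k) * w^2 * c)) + 1 := by
          rw [hV]
          have hpow : (n:ℤ)^(2*k+1) = (n:ℤ) * (n:ℤ)^(2*k) := by ring
          rw [hpow, hn2, hrZ]
          ring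
        omega

private lemma key_dvd (n : ℕ) (hn3 : 3 ≤ n) (h8 : 2 ∣ n → 8 ∣ n) :
    ∀ k e : ℕ, ((n:ℤ)^(k+1) ∣ (1+(n:ℤ))^e - 1) → n^k ∣ e := by
  intro k
  induction k with
  | zero => intro e _; simp
  | succ k ih =>
    intro e h
    have hn0 : (n:ℤ) ≠ 0 := by positivity
    have hprev : n^k ∣ e := ih e (dvd_trans (pow_dvd_pow _ (by omega)) h)
    obtain ⟨t, rfl⟩ := hprev
    obtain ⟨w, hw, hcop⟩ := key_w n hn3 h8 k
    obtain ⟨c, hc⟩ := binom_aux ((n:ℤ)^(k+1) * w) t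
    have hx : (1+(n:ℤ))^(n^k * t) = (1 + (n:ℤ)^(k+1)*w)^t := by rw [pow_mul, hw]
    rw [hx, hc] at h
    have heq : (1 + (t:ℤ)*((n:ℤ)^(k+1)*w) + (t.choose 2)*((n:ℤ)^(k+1)*w)^2 + ((n:ℤ)^(k+1)*w)^3 * c) - 1
        = (n:ℤ)^(k+1) * ((t:ℤ)*w + (n:ℤ)^(k+1) * ((t.choose 2)*w^2 + (n:ℤ)^(k+1)*w^3*c)) := by
      ring
    rw [heq, pow_succ] at h
    have h' : (n:ℤ) ∣ (t:ℤ)*w + (n:ℤ)^(k+1) * ((t.choose 2)*w^2 + (n:ℤ)^(k+1)*w^3*c) :=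
      (mul_dvd_mul_iff_left (pow_ne_zero (k+1) hn0)).mp h
    have h'' : (n:ℤ) ∣ (t:ℤ)*w := by
      have hrest : (n:ℤ) ∣ (n:ℤ)^(k+1) * ((t.choose 2)*w^2 + (n:ℤ)^(k+1)*w^3*c) :=
        (dvd_pow_self (n:ℤ) (Nat.succ_ne_zero k)).mul_right _
      simpa using dvd_sub h' hrest
    have ht : (n:ℤ) ∣ (t:ℤ) := hcop.dvd_of_dvd_mul_right h''
    obtain ⟨t', rfl⟩ : n ∣ t := by exact_mod_cast ht
    exact ⟨t', by ring⟩

theorem stmt_12 (m : ℕ) (hm : 2 ≤ m) (k : ℕ) (hk : 1 ≤ k) :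
    orderOf (m : ZMod ((m ^ 2 - 1) ^ k)) = 2 * (m ^ 2 - 1) ^ (k - 1) := by
  obtain ⟨K, rfl⟩ : ∃ K, k = K + 1 := ⟨k-1, by omega⟩
  set n := m^2 - 1 with hn
  have hpw : m^2 = m*m := pow_two m
  have h4 : 2*2 ≤ m*m := Nat.mul_le_mul hm hm
  have hm2 : n + 1 = m^2 := by omega
  have hn3 : 3 ≤ n := by omega
  have h8 : 2 ∣ n → 8 ∣ n := by
    intro h2
    rcases Nat.even_or_odd m with ⟨a, ha⟩ | ho
    · exfalso
      have : m^2 = 4*(a*a) := by rw [ha, pow_two]; ring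
      omega
    · obtain ⟨j, hj⟩ := ho
      have hsq : m^2 = 4*(j*(j+1)) + 1 := by rw [hj]; ring
      obtain ⟨i, hi⟩ := Nat.even_mul_succ_self j
      omega
  simp only [Nat.add_sub_cancel]
  have hmZ : ((m:ℤ))^2 = 1 + (n:ℤ) := by
    have : ((n:ℤ)) + 1 = (m:ℤ)^2 := by exact_mod_cast hm2
    linarith
  obtain ⟨w, hw, hcop⟩ := key_w n hn3 h8 K
  have hNcast : ((n^(K+1) : ℕ) : ℤ) = (n:ℤ)^(K+1) := by push_cast; ring
  have ha : (m : ZMod (n^(K+1)))^(2 * n^K) = 1 := by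
    have hdvd : ((n^(K+1) : ℕ):ℤ) ∣ (m:ℤ)^(2*n^K) - 1 := by
      rw [hNcast]
      have h1 : ((m:ℤ))^(2*n^K) = (1+(n:ℤ))^(n^K) := by rw [pow_mul, hmZ]
      rw [h1, hw]
      exact ⟨w, by ring⟩
    have := (ZMod.intCast_zmod_eq_zero_iff_dvd _ _).mpr hdvd
    push_cast at this
    linear_combination this
  have hb : ∀ d : ℕ, (m : ZMod (n^(K+1)))^d = 1 → 2 * n^K ∣ d := by
    intro d hd
    have hdvd : ((n^(K+1) : ℕ):ℤ) ∣ (m:ℤ)^d - 1 := by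
      rw [← ZMod.intCast_zmod_eq_zero_iff_dvd]
      push_cast
      rw [hd, sub_self]
    have hdvd_n : (n:ℤ) ∣ (m:ℤ)^d - 1 := by
      refine dvd_trans ?_ hdvd
      rw [hNcast]
      exact dvd_pow_self _ (Nat.succ_ne_zero K)
    have h2d : 2 ∣ d := by
      by_contra hodd
      obtain ⟨r, rfl⟩ : ∃ r, d = 2*r + 1 := ⟨d/2, by omega⟩
      have h1 : (n:ℤ) ∣ ((m:ℤ)^2)^r - 1 := by
        have := sub_dvd_pow_sub_pow ((m:ℤ)^2) 1 r
        have hsub : (m:ℤ)^2 - 1 = (n:ℤ) := by linarith [hmZ]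
        simpa [hsub] using this
      have h2' : (n:ℤ) ∣ (m:ℤ)^(2*r+1) - (m:ℤ) := by
        have heq : (m:ℤ)^(2*r+1) - m = (((m:ℤ)^2)^r - 1) * m := by
          rw [← pow_mul]; ring_nf
        rw [heq]; exact h1.mul_right _
      have h3 : (n:ℤ) ∣ (m:ℤ) - 1 := by
        have := dvd_sub hdvd_n h2'
        have heq : ((m:ℤ)^(2*r+1) - 1) - ((m:ℤ)^(2*r+1) - (m:ℤ)) = (m:ℤ) - 1 := by ring
        rwa [heq] at this
      have hmZ2 : (2:ℤ) ≤ (m:ℤ) := by exact_mod_cast hm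
      have hle : (n:ℤ) ≤ (m:ℤ) - 1 := Int.le_of_dvd (by linarith) h3
      nlinarith [hmZ]
    obtain ⟨e, rfl⟩ := h2d
    have hdvd' : (n:ℤ)^(K+1) ∣ (1+(n:ℤ))^e - 1 := by
      rw [← hmZ, ← pow_mul, ← hNcast]
      exact hdvd
    have := key_dvd n hn3 h8 K e hdvd'
    exact mul_dvd_mul_left 2 this
  exact Nat.dvd_antisymm (orderOf_dvd_of_pow_eq_one ha) (hb _ (pow_orderOf_eq_one _))
end

section
/- Let m ≥ 2 and let ρ : BS(1,m) → T_n(ℤ[1/m]) be an injective homomorphism with ρ(ℤ[1/m]) ⊆ U_n(ℤ[1/m]) (a special representation). Then ρ^{-1}(U_n(ℤ[1/m])) is exactly the normal subgroup ℤ[1/m] of BS(1,m) = ℤ[1/m] ⋊ ℤ. -/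
/-- `ℤ[1/m]` as a subring of `ℚ`. -/
def Zinv (m : ℕ) : Subring ℚ := Subring.closure {((m : ℚ))⁻¹}

/-- The single defining relator `t a t⁻¹ a⁻ᵐ` of `BS(1,m)`, with `false ↦ a`, `true ↦ t`. -/
def BSrel (m : ℕ) : Set (FreeGroup Bool) :=
  {FreeGroup.of true * FreeGroup.of false * (FreeGroup.of true)⁻¹ *
    (FreeGroup.of false) ^ (-(m : ℤ))}

/-- The Baumslag–Solitar group `BS(1,m) = ⟨a, t ∣ t a t⁻¹ = aᵐ⟩`. -/
abbrev BS (m : ℕ) := PresentedGroup (BSrel m)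

/-- The generator `a` of `BS(1,m)`. -/
def BSa (m : ℕ) : BS m := PresentedGroup.of false

/-- The generator `t` of `BS(1,m)`. -/
def BSt (m : ℕ) : BS m := PresentedGroup.of true

theorem BS_rel (m : ℕ) : BSt m * BSa m * (BSt m)⁻¹ = BSa m ^ m := by
  have h : PresentedGroup.mk (BSrel m)
      (FreeGroup.of true * FreeGroup.of false * (FreeGroup.of true)⁻¹ *
        (FreeGroup.of false) ^ (-(m : ℤ))) = 1 := by
    apply (QuotientGroup.eq_one_iff _).2
    exact Subgroup.subset_normalClosure rfl
  simp only [map_mul, map_inv, map_zpow] at h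
  have := mul_eq_one_iff_eq_inv.mp h
  rw [← zpow_neg, neg_neg] at this
  simpa [BSt, BSa, PresentedGroup.of, zpow_natCast] using this

theorem BS_rel_pow (m k : ℕ) : BSt m ^ k * BSa m * (BSt m ^ k)⁻¹ = BSa m ^ m ^ k := by
  induction k with
  | zero => simp
  | succ k ih =>
    have h1 : BSt m ^ (k+1) * BSa m * (BSt m ^ (k+1))⁻¹
        = BSt m ^ k * (BSt m * BSa m * (BSt m)⁻¹) * (BSt m ^ k)⁻¹ := by
      group
    rw [h1, BS_rel, ← conj_pow, ih, ← pow_mul, pow_succ]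

def BSφ (m : ℕ) : BS m →* Multiplicative ℤ :=
  PresentedGroup.toGroup (f := fun b => if b then Multiplicative.ofAdd 1 else 1)
    (by rintro r rfl; simp)

@[simp] theorem BSφ_a (m : ℕ) : BSφ m (BSa m) = 1 := by
  simp [BSφ, BSa, PresentedGroup.toGroup.of]

@[simp] theorem BSφ_t (m : ℕ) : BSφ m (BSt m) = Multiplicative.ofAdd 1 := by
  simp [BSφ, BSt, PresentedGroup.toGroup.of]

theorem BS_decomp (m : ℕ) (g : BS m) :
    ∃ w ∈ Subgroup.normalClosure {BSa m}, g = w * BSt m ^ (BSφ m g).toAdd := by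
  have hN : (Subgroup.normalClosure {BSa m}).Normal := Subgroup.normalClosure_normal
  set N := Subgroup.normalClosure {BSa m} with hNdef
  have hmem : g ∈ Subgroup.closure (Set.range (PresentedGroup.of : Bool → BS m)) := by
    rw [PresentedGroup.closure_range_of]; trivial
  refine Subgroup.closure_induction (fun x hx => ?_) ?_ (fun x y _ _ ihx ihy => ?_)
    (fun x _ ihx => ?_) hmem
  · obtain ⟨b, rfl⟩ := hx
    cases b
    · refine ⟨BSa m, Subgroup.subset_normalClosure rfl, ?_⟩
      show BSa m = BSa m * BSt m ^ (BSφ m (BSa m)).toAdd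
      simp
    · refine ⟨1, one_mem N, ?_⟩
      show BSt m = 1 * BSt m ^ (BSφ m (BSt m)).toAdd
      simp
  · exact ⟨1, one_mem N, by simp⟩
  · obtain ⟨w, hw, hx⟩ := ihx
    obtain ⟨v, hv, hy⟩ := ihy
    refine ⟨w * (BSt m ^ (BSφ m x).toAdd * v * (BSt m ^ (BSφ m x).toAdd)⁻¹),
      mul_mem hw (hN.conj_mem v hv _), ?_⟩
    rw [map_mul, toAdd_mul, zpow_add]
    conv_lhs => rw [hx, hy]
    group
  · obtain ⟨w, hw, hx⟩ := ihx
    refine ⟨BSt m ^ (-(BSφ m x).toAdd) * w⁻¹ * (BSt m ^ (-(BSφ m x).toAdd))⁻¹,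
      hN.conj_mem w⁻¹ (inv_mem hw) _, ?_⟩
    rw [map_inv, toAdd_inv]
    conv_lhs => rw [hx]
    group

theorem BSa_ne_one (m : ℕ) (hm : 2 ≤ m) : BSa m ≠ 1 := by
  have hm0 : (m : ℚ) ≠ 0 := by positivity
  have hrel : ∀ r ∈ BSrel m,
      FreeGroup.lift (fun b => if b then (Equiv.mulRight₀ (m : ℚ) hm0)
        else Equiv.addRight (1 : ℚ)) r = 1 := by
    rintro r rfl
    simp only [map_mul, map_inv, map_zpow, FreeGroup.lift_apply_of, if_true, if_false]
    ext x
    simp only [Equiv.Perm.mul_apply, Equiv.Perm.inv_def,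
      Equiv.coe_addRight, Equiv.mulRight₀, Units.mulRight_symm,
      Units.mulRight_apply, div_eq_mul_inv, Equiv.Perm.one_apply, smul_eq_mul, mul_one]
    simp [div_eq_mul_inv, Equiv.Perm.inv_def]
    field_simp
    ring
  intro h
  have key := congrArg (PresentedGroup.toGroup hrel) h
  unfold BSa at key
  rw [PresentedGroup.toGroup.of hrel (x := false), map_one] at key
  simp only [Bool.false_eq_true, if_false] at key
  have := congrFun (congrArg (fun e : Equiv.Perm ℚ => (e : ℚ → ℚ)) key) 0
  norm_num at this

section Below

variable {R : Type*} [CommRing R] {n : ℕ}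

def Below (d : ℕ) (X : Matrix (Fin n) (Fin n) R) : Prop :=
  ∀ i j : Fin n, (j : ℕ) < (i : ℕ) + d → X i j = 0

theorem Below.mono {d e : ℕ} {X : Matrix (Fin n) (Fin n) R} (h : Below e X) (hde : d ≤ e) :
    Below d X := fun i j hij => h i j (by omega)

theorem Below.mul {d e : ℕ} {X Y : Matrix (Fin n) (Fin n) R} (hX : Below d X) (hY : Below e Y) :
    Below (d + e) (X * Y) := by
  intro i j hij
  rw [Matrix.mul_apply]
  apply Finset.sum_eq_zero
  intro k _
  by_cases hk : (k : ℕ) < (i : ℕ) + d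
  · rw [hX i k hk, zero_mul]
  · rw [hY k j (by omega), mul_zero]

theorem Below.add {d : ℕ} {X Y : Matrix (Fin n) (Fin n) R} (hX : Below d X) (hY : Below d Y) :
    Below d (X + Y) := fun i j h => by
  rw [Matrix.add_apply, hX i j h, hY i j h, add_zero]

theorem Below.sub {d : ℕ} {X Y : Matrix (Fin n) (Fin n) R} (hX : Below d X) (hY : Below d Y) :
    Below d (X - Y) := fun i j h => by
  rw [Matrix.sub_apply, hX i j h, hY i j h, sub_zero]

theorem Below.smul {d : ℕ} {c : R} {X : Matrix (Fin n) (Fin n) R} (hX : Below d X) :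
    Below d (c • X) := fun i j h => by
  rw [Matrix.smul_apply, hX i j h, smul_zero]

theorem Below.one : Below 0 (1 : Matrix (Fin n) (Fin n) R) := fun i j h => by
  rw [Matrix.one_apply_ne (by intro hij; subst hij; omega)]

theorem Below.zero (d : ℕ) : Below d (0 : Matrix (Fin n) (Fin n) R) := fun i j _ => rfl

/-- binomial-approximation: `A^M - 1 - M•N` lives strictly deeper than `N`. -/
theorem pow_approx {d : ℕ} (hd : 1 ≤ d) {N : Matrix (Fin n) (Fin n) R} (hN : Below d N)
    (M : ℕ) : Below (d + 1) ((1 + N) ^ M - 1 - (M : R) • N) := by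
  induction M with
  | zero => simpa using Below.zero (d+1)
  | succ M ih =>
    have hA0 : Below 0 (1 + N) := Below.one.add (hN.mono (by omega))
    have hNN : Below (d + 1) (N * N) := (hN.mul hN).mono (by omega)
    have key : (1 + N) ^ (M + 1) - 1 - ((M + 1 : ℕ) : R) • N
        = ((1 + N) ^ M - 1 - (M : R) • N) * (1 + N) + (M : R) • (N * N) := by
      push_cast
      rw [pow_succ]
      noncomm_ring
      simp [add_smul]
      abel
    rw [key]
    exact ((ih.mul hA0).mono (by omega)).add hNN.smul

theorem unitri_eq_one {R : Type*} [CommRing R] [NoZeroDivisors R] [CharZero R] {n : ℕ}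
    {S A : Matrix (Fin n) (Fin n) R} (hS : Below 1 (S - 1)) (hA : Below 1 (A - 1))
    {M : ℕ} (hM : 2 ≤ M) (heq : S * A = A ^ M * S) : A = 1 := by
  set N := A - 1 with hNdef
  set U := S - 1 with hUdef
  classical
  have hA1 : A = 1 + N := by rw [hNdef]; abel
  have hS1 : S = 1 + U := by rw [hUdef]; abel
  by_contra hA0
  have hNne : N ≠ 0 := fun h => hA0 (by rw [hA1, h, add_zero])
  have hex : ∃ e, ¬ Below e N := by
    refine ⟨n, fun h => hNne ?_⟩
    ext i j
    exact h i j (by omega)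
  have he : ¬ Below (Nat.find hex) N := Nat.find_spec hex
  have he2 : 2 ≤ Nat.find hex := by
    by_contra hlt
    exact he (hA.mono (by omega))
  set d := Nat.find hex - 1 with hddef
  have hd : 1 ≤ d := by omega
  have hBd : Below d N := by
    by_contra hc
    exact absurd (Nat.find_min' hex hc) (by omega)
  have he' : ¬ Below (d + 1) N := by
    have hde : d + 1 = Nat.find hex := by omega
    rw [hde]
    exact Nat.find_spec hex
  simp only [Below, not_forall] at he'
  obtain ⟨i, j, hij, hNij⟩ := he'
  have hji : (j : ℕ) = (i : ℕ) + d := by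
    have h1 := hBd i j
    by_cases hlt : (j : ℕ) < (i : ℕ) + d
    · exact absurd (h1 hlt) hNij
    · omega
  have ent : ∀ X : Matrix (Fin n) (Fin n) R, Below (d+1) X → X i j = 0 :=
    fun X h => h i j (by omega)
  set E := A ^ M - 1 - (M : R) • N with hEdef
  have hE : Below (d + 1) E := by
    have := pow_approx hd hBd M
    rwa [hEdef, hA1]
  have hAM : A ^ M = 1 + (M : R) • N + E := by rw [hEdef]; abel
  have hentry : (S * A) i j = (A ^ M * S) i j := by rw [heq]
  have hUN : (U * N) i j = 0 := ent _ ((hS.mul hBd).mono (by omega))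
  have hAMU : (((M : R) • N + E) * U) i j = 0 :=
    ent _ (((hBd.smul.add (hE.mono (by omega))).mul hS).mono (by omega))
  have lhs : (S * A) i j = (1 : Matrix (Fin n) (Fin n) R) i j + U i j + N i j := by
    have hexp : S * A = 1 + U + N + U * N := by rw [hS1, hA1]; noncomm_ring
    rw [hexp]
    simp [Matrix.add_apply, hUN]
  have rhs : (A ^ M * S) i j
      = (1 : Matrix (Fin n) (Fin n) R) i j + (M : R) * N i j + U i j := by
    have hexp : A ^ M * S = 1 + (M : R) • N + E + U + ((M : R) • N + E) * U := by
      rw [hS1]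
      rw [show A ^ M * (1 + U) = A ^ M + A ^ M * U by noncomm_ring]
      rw [hAM]
      noncomm_ring
    rw [hexp]
    simp [Matrix.add_apply, hAMU, ent _ hE]
  rw [lhs, rhs] at hentry
  have hfin : ((M : R) - 1) * N i j = 0 := by linear_combination -hentry
  have hM1 : (M : R) - 1 ≠ 0 := by
    have : (M : R) ≠ 1 := by
      intro h
      have : (M : R) = ((1 : ℕ) : R) := by simpa using h
      have := Nat.cast_injective (R := R) this
      omega
    exact sub_ne_zero.mpr this
  rcases mul_eq_zero.mp hfin with h | h
  · exact hM1 h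
  · exact hNij h

end Below

theorem stmt_18 (m n : ℕ) (hm : 2 ≤ m)
    (ρ : BS m →* (Matrix (Fin n) (Fin n) (Zinv m))ˣ)
    (hinj : Function.Injective ρ)
    (htri : ∀ g : BS m, ∀ i j : Fin n, j < i → (ρ g).val i j = 0)
    (hspec : ∀ g ∈ Subgroup.normalClosure {BSa m}, ∀ i : Fin n, (ρ g).val i i = 1) :
    ∀ g : BS m, g ∈ Subgroup.normalClosure {BSa m} ↔ ∀ i : Fin n, (ρ g).val i i = 1 := by
  classical
  have Dmul : ∀ g h : BS m, (∀ i, (ρ g).val i i = 1) → (∀ i, (ρ h).val i i = 1) →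
      ∀ i, (ρ (g * h)).val i i = 1 := by
    intro g h hg hh i
    rw [map_mul, Units.val_mul, Matrix.mul_apply, Finset.sum_eq_single i]
    · rw [hg i, hh i, one_mul]
    · intro k _ hki
      rcases lt_or_gt_of_ne hki with hlt | hlt
      · rw [htri g i k hlt, zero_mul]
      · rw [htri h k i hlt, mul_zero]
    · intro habs
      exact absurd (Finset.mem_univ i) habs
  have Dinv : ∀ g : BS m, (∀ i, (ρ g).val i i = 1) → ∀ i, (ρ g⁻¹).val i i = 1 := by
    intro g hg i
    have h1 : (∀ i, (ρ (g * g⁻¹)).val i i = 1) := by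
      intro i
      rw [mul_inv_cancel, map_one, Units.val_one, Matrix.one_apply_eq]
    have h2 := h1 i
    rw [map_mul, Units.val_mul, Matrix.mul_apply, Finset.sum_eq_single i] at h2
    · rw [hg i, one_mul] at h2
      exact h2
    · intro k _ hki
      rcases lt_or_gt_of_ne hki with hlt | hlt
      · rw [htri g i k hlt, zero_mul]
      · rw [htri g⁻¹ k i hlt, mul_zero]
    · intro habs
      exact absurd (Finset.mem_univ i) habs
  intro g
  constructor
  · exact fun h i => hspec g h i
  · intro hD
    obtain ⟨w, hw, hgw⟩ := BS_decomp m g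
    by_cases hk : (BSφ m g).toAdd = 0
    · rw [hgw, hk, zpow_zero, mul_one]
      exact hw
    exfalso
    set k := (BSφ m g).toAdd with hkdef
    have hDw : ∀ i, (ρ w⁻¹).val i i = 1 := hspec w⁻¹ (inv_mem hw)
    have hDtk : ∀ i, (ρ (BSt m ^ k)).val i i = 1 := by
      have hwg : BSt m ^ k = w⁻¹ * g := by rw [hgw]; group
      rw [hwg]
      exact Dmul _ _ hDw hD
    set k' := k.natAbs with hk'def
    have hk1 : 1 ≤ k' := by
      rcases Int.natAbs_pos.mpr hk with h
      omega
    have hDt : ∀ i, (ρ (BSt m ^ k')).val i i = 1 := by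
      rcases le_or_gt 0 k with h0 | h0
      · have hkk : (k' : ℤ) = k := Int.natAbs_of_nonneg h0
        rw [← zpow_natCast, hkk]
        exact hDtk
      · have hkk : BSt m ^ k' = (BSt m ^ k)⁻¹ := by
          rw [← zpow_natCast, ← zpow_neg]
          congr 1
          omega
        rw [hkk]
        exact Dinv _ hDtk
    set M := m ^ k' with hMdef
    have hM : 2 ≤ M := le_trans hm (by
      calc m = m ^ 1 := (pow_one m).symm
        _ ≤ m ^ k' := Nat.pow_le_pow_right (by omega) hk1)
    have hequ : ρ (BSt m ^ k') * ρ (BSa m) = ρ (BSa m) ^ M * ρ (BSt m ^ k') := by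
      rw [← map_pow, ← map_mul, ← map_mul]
      congr 1
      rw [← BS_rel_pow m k']
      group
    have heqm : (ρ (BSt m ^ k')).val * (ρ (BSa m)).val
        = (ρ (BSa m)).val ^ M * (ρ (BSt m ^ k')).val := by
      have := congrArg Units.val hequ
      simpa [Units.val_mul] using this
    have haN : BSa m ∈ Subgroup.normalClosure {BSa m} := Subgroup.subset_normalClosure rfl
    have hSb : Below 1 ((ρ (BSt m ^ k')).val - 1) := by
      intro i j hij
      rw [Matrix.sub_apply]
      rcases eq_or_ne j i with hji | hji
      · subst hji
        rw [hDt j, Matrix.one_apply_eq, sub_self]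
      · have hlt : j < i := by
          rw [Fin.lt_def]
          have : (j : ℕ) ≠ (i : ℕ) := fun h => hji (Fin.ext h)
          omega
        rw [htri _ i j hlt, Matrix.one_apply_ne (Ne.symm hji), sub_zero]
    have hAb : Below 1 ((ρ (BSa m)).val - 1) := by
      intro i j hij
      rw [Matrix.sub_apply]
      rcases eq_or_ne j i with hji | hji
      · subst hji
        rw [hspec _ haN j, Matrix.one_apply_eq, sub_self]
      · have hlt : j < i := by
          rw [Fin.lt_def]
          have : (j : ℕ) ≠ (i : ℕ) := fun h => hji (Fin.ext h)
          omega
        rw [htri _ i j hlt, Matrix.one_apply_ne (Ne.symm hji), sub_zero]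
    have hA1 : (ρ (BSa m)).val = 1 := unitri_eq_one hSb hAb hM heqm
    have hρ1 : ρ (BSa m) = 1 := Units.ext hA1
    have : BSa m = 1 := hinj (by rw [hρ1, map_one])
    exact BSa_ne_one m hm this
end
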